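/- arXiv:2306.10253 — 2 statements merged into one kernel-verified Lean document; each statement's English description precedes it below -/
import Mathlib

section
/- Let A be an n×n matrix over a field F obtained by replacing, in the block-diagonal matrix diag(C(p_s), C(p_{s−1}), ..., C(p_1)) of companion matrices, the top-left block diag(C(p_s), ..., C(p_{s−m+1})) (of total size δ_m = deg p_s + ... + deg p_{s−m+1}) by the companion matrix C(h) of a monic polynomial h of degree δ_m. Then the resulting matrix differs from the original in at most m columns, hence their difference has rank at most m, and the resulting matrix has characteristic polynomial h·p_{s−m}···p_1. -/
/-- The companion matrix of a monic polynomial `p` of degree `d`. -/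
def companionMatrix {F : Type*} [Field F] (d : ℕ) (p : Polynomial F) :
    Matrix (Fin d) (Fin d) F :=
  Matrix.of fun i j =>
    if (j : ℕ) = d - 1 then -p.coeff i else if (i : ℕ) = (j : ℕ) + 1 then 1 else 0


open Polynomial Matrix Finset



lemma companionMatrix_apply {F : Type*} [Field F] (d : ℕ) (q : Polynomial F) (x y : Fin d) :
    companionMatrix d q x y =
      if (y : ℕ) = d - 1 then -q.coeff x else if (x : ℕ) = (y : ℕ) + 1 then 1 else 0 := rfl

theorem charpoly_companionMatrix {F : Type*} [Field F] :
    ∀ (d : ℕ) (q : Polynomial F), q.Monic → q.natDegree = d →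
      (companionMatrix d q).charpoly = q := by
  intro d
  induction d with
  | zero =>
    intro q hq hd
    rw [Matrix.charpoly, Matrix.det_fin_zero, (hq.natDegree_eq_zero.mp hd)]
  | succ k ih =>
    intro q hq hd
    match k, ih with
    | 0, _ =>
      have h00 : companionMatrix 1 q 0 0 = -q.coeff 0 := by
        rw [companionMatrix_apply]; norm_num
      rw [Matrix.charpoly, Matrix.det_fin_one, Matrix.charmatrix_apply_eq, h00,
        map_neg, sub_neg_eq_add, ← hq.eq_X_add_C hd]
    | k + 1, ih =>
      show (companionMatrix (k + 2) q).charpoly = q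
      have hdvx_deg : q.divX.natDegree = k + 1 := by
        rw [natDegree_divX_eq_natDegree_tsub_one, hd]
        omega
      have hdvx_mon : q.divX.Monic := by
        unfold Polynomial.Monic Polynomial.leadingCoeff
        rw [hdvx_deg, coeff_divX, ← hd]
        exact hq
      set M := charmatrix (companionMatrix (k + 2) q) with hM
      have h00 : M 0 0 = X := by
        rw [hM, Matrix.charmatrix_apply_eq, companionMatrix_apply]
        norm_num
      have h0last : M 0 (Fin.last (k + 1)) = C (q.coeff 0) := by
        rw [hM, Matrix.charmatrix_apply_ne _ _ _ (by simp [Fin.ext_iff]),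
          companionMatrix_apply]
        norm_num
      have h0mid : ∀ j : Fin (k + 2), j ≠ 0 → j ≠ Fin.last (k + 1) → M 0 j = 0 := by
        intro j hj0 hjl
        rw [hM, Matrix.charmatrix_apply_ne _ _ _ (Ne.symm hj0), companionMatrix_apply]
        have h1 : (j : ℕ) ≠ k + 2 - 1 := fun hc => hjl (Fin.ext (by simpa using hc))
        have h2 : (0 : ℕ) ≠ (j : ℕ) + 1 := by omega
        rw [if_neg h1]
        simp
      -- the first minor
      have hminor0 : M.submatrix Fin.succ ((0 : Fin (k+2)).succAbove)
          = charmatrix (companionMatrix (k + 1) q.divX) := by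
        apply Matrix.ext
        intro a b
        rw [Matrix.submatrix_apply, Fin.succAbove_zero]
        by_cases hab : a = b
        · subst hab
          rw [hM, Matrix.charmatrix_apply_eq, Matrix.charmatrix_apply_eq,
            companionMatrix_apply, companionMatrix_apply]
          by_cases hbl : (a : ℕ) = k
          · simp [Fin.val_succ, hbl, coeff_divX]
          · have h1 : ((a.succ : Fin (k+2)) : ℕ) ≠ k + 2 - 1 := by
              simp only [Fin.val_succ]; omega
            have h2 : (a : ℕ) ≠ k + 1 - 1 := by omega
            rw [if_neg h1, if_neg h2]
            simp
        · rw [hM, Matrix.charmatrix_apply_ne _ _ _ (fun hc => hab (Fin.succ_injective _ hc)),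
            Matrix.charmatrix_apply_ne _ _ _ hab, companionMatrix_apply, companionMatrix_apply]
          by_cases hbl : (b : ℕ) = k
          · have h1 : ((b.succ : Fin (k+2)) : ℕ) = k + 2 - 1 := by
              simp only [Fin.val_succ]; omega
            have h2 : (b : ℕ) = k + 1 - 1 := by omega
            rw [if_pos h1, if_pos h2, Fin.val_succ, coeff_divX]
          · have h1 : ((b.succ : Fin (k+2)) : ℕ) ≠ k + 2 - 1 := by
              simp only [Fin.val_succ]; omega
            have h2 : (b : ℕ) ≠ k + 1 - 1 := by omega
            rw [if_neg h1, if_neg h2]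
            simp only [Fin.val_succ, Nat.add_right_cancel_iff]
      -- the last minor is upper triangular with -1 diagonal
      have hminorlast : (M.submatrix Fin.succ ((Fin.last (k+1)).succAbove)).det
          = (-1 : Polynomial F) ^ (k + 1) := by
        have htri : (M.submatrix Fin.succ ((Fin.last (k+1)).succAbove)).BlockTriangular id := by
          intro a b hab
          have hab' : (b : ℕ) < (a : ℕ) := hab
          have hbl := b.isLt
          rw [Matrix.submatrix_apply, Fin.succAbove_last, hM,
            Matrix.charmatrix_apply_ne _ _ _
              (by simp only [ne_eq, Fin.ext_iff, Fin.val_succ, Fin.coe_castSucc]; omega),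
            companionMatrix_apply]
          rw [if_neg (by simp only [Fin.coe_castSucc]; omega),
            if_neg (by simp only [Fin.val_succ, Fin.coe_castSucc]; omega)]
          simp
        rw [Matrix.det_of_upperTriangular htri]
        have hdiag : ∀ a : Fin (k+1),
            (M.submatrix Fin.succ ((Fin.last (k+1)).succAbove)) a a = -1 := by
          intro a
          have hal := a.isLt
          rw [Matrix.submatrix_apply, Fin.succAbove_last, hM,
            Matrix.charmatrix_apply_ne _ _ _
              (by simp only [ne_eq, Fin.ext_iff, Fin.val_succ, Fin.coe_castSucc]; omega),
            companionMatrix_apply]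
          rw [if_neg (by simp only [Fin.coe_castSucc]; omega),
            if_pos (by simp only [Fin.val_succ, Fin.coe_castSucc])]
          simp
        rw [Finset.prod_congr rfl (fun a _ => hdiag a)]
        simp
      have hdet : M.det = X * q.divX + C (q.coeff 0) := by
        rw [Matrix.det_succ_row_zero,
          ← Finset.sum_subset (Finset.subset_univ ({0, Fin.last (k+1)} : Finset (Fin (k+2))))
            (fun j _ hj => by
              rw [h0mid j (fun hc => hj (by simp [hc])) (fun hc => hj (by simp [hc])),
                mul_zero, zero_mul])]
        rw [Finset.sum_pair (show (0 : Fin (k+2)) ≠ Fin.last (k+1) from fun hc => by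
          have := congrArg Fin.val hc
          simp [Fin.val_last] at this)]
        rw [h00, h0last, hminor0, hminorlast]
        have hih := ih q.divX hdvx_mon hdvx_deg
        rw [Matrix.charpoly] at hih
        rw [hih]
        simp only [Fin.val_zero, pow_zero, one_mul, Fin.val_last]
        have hsq : (-1 : Polynomial F) ^ (k + 1) * ((-1 : Polynomial F) ^ (k + 1)) = 1 := by
          rw [← pow_add]
          exact Even.neg_one_pow ⟨k + 1, by ring⟩
        calc X * q.divX + (-1) ^ (k + 1) * C (q.coeff 0) * (-1) ^ (k + 1)
            = X * q.divX + C (q.coeff 0) * ((-1) ^ (k + 1) * (-1) ^ (k + 1)) := by ring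
          _ = X * q.divX + C (q.coeff 0) := by rw [hsq, mul_one]
      rw [Matrix.charpoly, hdet, X_mul_divX_add]


theorem my_det_blockDiagonal' {R : Type*} [CommRing R] {o : Type*} [Fintype o] [DecidableEq o]
    [LinearOrder o] {n' : o → Type*} [∀ i, Fintype (n' i)] [∀ i, DecidableEq (n' i)]
    (M : ∀ i, Matrix (n' i) (n' i) R) :
    (blockDiagonal' M).det = ∏ i, (M i).det := by
  rw [Matrix.BlockTriangular.det_fintype (blockTriangular_blockDiagonal' M)]
  refine Finset.prod_congr rfl fun k _ => ?_
  have hq : ∀ a : { a : Σ i, n' i // a.1 = k }, n' a.1.1 = n' k := fun a => congrArg n' a.2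
  let f : { a : Σ i, n' i // a.1 = k } ≃ n' k :=
    { toFun := fun a => cast (hq a) a.1.2
      invFun := fun x => ⟨⟨k, x⟩, rfl⟩
      left_inv := by rintro ⟨⟨ka, xa⟩, ha⟩; subst ha; rfl
      right_inv := fun x => rfl }
  have key : ((blockDiagonal' M).toSquareBlock Sigma.fst k).submatrix ⇑f.symm ⇑f.symm = M k := by
    apply Matrix.ext
    intro x y
    show blockDiagonal' M ⟨k, x⟩ ⟨k, y⟩ = M k x y
    exact Matrix.blockDiagonal'_apply_eq M k x y
  rw [← Matrix.det_submatrix_equiv_self f.symm ((blockDiagonal' M).toSquareBlock Sigma.fst k), key]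

theorem my_charpoly_blockDiagonal' {R : Type*} [CommRing R] {o : Type*} [Fintype o] [DecidableEq o]
    [LinearOrder o] {n' : o → Type*} [∀ i, Fintype (n' i)] [∀ i, DecidableEq (n' i)]
    (M : ∀ i, Matrix (n' i) (n' i) R) :
    (blockDiagonal' M).charpoly = ∏ i, (M i).charpoly := by
  have hc : charmatrix (blockDiagonal' M) = blockDiagonal' (fun i => charmatrix (M i)) := by
    apply Matrix.ext
    rintro ⟨ka, xa⟩ ⟨kb, xb⟩
    by_cases hk : ka = kb
    · subst hk
      rw [Matrix.blockDiagonal'_apply_eq]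
      by_cases hx : xa = xb
      · subst hx; simp [Matrix.charmatrix_apply_eq, Matrix.blockDiagonal'_apply_eq]
      · rw [Matrix.charmatrix_apply_ne _ _ _ hx,
          Matrix.charmatrix_apply_ne _ _ _ (fun hcon => hx (by cases hcon; rfl)),
          Matrix.blockDiagonal'_apply_eq]
    · rw [Matrix.blockDiagonal'_apply_ne _ _ _ hk,
        Matrix.charmatrix_apply_ne _ _ _ (fun hcon => hk (congrArg Sigma.fst hcon)),
        Matrix.blockDiagonal'_apply_ne _ _ _ hk]
      simp
  rw [Matrix.charpoly, hc, my_det_blockDiagonal']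
  rfl

lemma blockDiagonal'_companion_apply {F : Type*} [Field F] {ι : Type*} [DecidableEq ι]
    (Q : ι → Polynomial F) (a b : Σ i : ι, Fin ((Q i).natDegree)) :
    blockDiagonal' (fun i => companionMatrix ((Q i).natDegree) (Q i)) a b
      = if a.1 = b.1 then
          (if (b.2 : ℕ) = (Q b.1).natDegree - 1 then -(Q b.1).coeff (a.2 : ℕ)
           else if (a.2 : ℕ) = (b.2 : ℕ) + 1 then 1 else 0)
        else 0 := by
  rcases a with ⟨i, x⟩; rcases b with ⟨j, y⟩
  by_cases hij : i = j
  · subst hij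
    rw [Matrix.blockDiagonal'_apply_eq, if_pos rfl]
    rfl
  · rw [Matrix.blockDiagonal'_apply_ne _ _ _ hij, if_neg hij]

lemma rank_le_card_of_cols_zero {F : Type*} [Field F] {n : ℕ} (A : Matrix (Fin n) (Fin n) F)
    (S : Finset (Fin n)) (hA : ∀ j ∉ S, ∀ i, A i j = 0) : A.rank ≤ S.card := by
  classical
  have hfac : A = (Matrix.of fun i (j : {x // x ∈ S}) => A i (j : Fin n)) *
      (Matrix.of fun (j : {x // x ∈ S}) j' => if (j : Fin n) = j' then (1 : F) else 0) := by
    ext i j'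
    rw [Matrix.mul_apply]
    by_cases hj : j' ∈ S
    · rw [Finset.sum_eq_single (⟨j', hj⟩ : {x // x ∈ S})]
      · simp
      · intro b _ hb
        have : (b : Fin n) ≠ j' := fun hc => hb (Subtype.ext hc)
        simp [this]
      · intro hc
        exact absurd (Finset.mem_univ _) hc
    · rw [hA j' hj i]
      symm
      apply Finset.sum_eq_zero
      intro b _
      have : (b : Fin n) ≠ j' := fun hc => hj (hc ▸ b.2)
      simp [this]
  calc A.rank ≤ (Matrix.of fun i (j : {x // x ∈ S}) => A i (j : Fin n)).rank := by
        conv_lhs => rw [hfac]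
        exact Matrix.rank_mul_le_left _ _
    _ ≤ Fintype.card {x // x ∈ S} := Matrix.rank_le_card_width _
    _ = S.card := Fintype.card_coe S


set_option maxHeartbeats 1600000 in
/-- Replacing, in the block diagonal matrix `diag(C(p_s), C(p_{s-1}), …, C(p_1))` (here
block `i` carries `p i.rev`, so blocks appear in decreasing order), the top-left block
`diag(C(p_s), …, C(p_{s-m+1}))` by the companion matrix of a monic polynomial `h` of the
same total degree yields a matrix that differs from the original in at most `m` columns,
hence the difference has rank at most `m`, and whose characteristic polynomial is
`h · p_{s-m} ⋯ p_1`.  The equivalences `e`, `e₂` are the order-preserving enumerations of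
the block index types. -/
theorem stmt_15 {F : Type*} [Field F] {n s m : ℕ} (hm0 : 1 ≤ m) (hm : m ≤ s)
    (p : Fin s → Polynomial F) (hmon : ∀ i, (p i).Monic)
    (hdeg : ∀ i, 1 ≤ (p i).natDegree)
    (h : Polynomial F) (hh : h.Monic)
    (hhdeg : h.natDegree
      = ∑ i ∈ Finset.univ.filter (fun i : Fin s => (i : ℕ) < m), (p i.rev).natDegree)
    (P : Fin (s - m + 1) → Polynomial F)
    (hP0 : ∀ i : Fin (s - m + 1), (i : ℕ) = 0 → P i = h)
    (hPs : ∀ (i : Fin (s - m + 1)) (j : Fin s),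
      0 < (i : ℕ) → (j : ℕ) = m + (i : ℕ) - 1 → P i = p j.rev)
    (e : (Σ i : Fin s, Fin ((p i.rev).natDegree)) ≃ Fin n)
    (he : ∀ (i : Fin s) (x : Fin ((p i.rev).natDegree)),
      ((e ⟨i, x⟩ : Fin n) : ℕ)
        = (∑ j ∈ Finset.univ.filter (fun j : Fin s => j < i), (p j.rev).natDegree) + x)
    (e₂ : (Σ i : Fin (s - m + 1), Fin ((P i).natDegree)) ≃ Fin n)
    (he₂ : ∀ (i : Fin (s - m + 1)) (x : Fin ((P i).natDegree)),
      ((e₂ ⟨i, x⟩ : Fin n) : ℕ)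
        = (∑ j ∈ Finset.univ.filter (fun j : Fin (s - m + 1) => j < i), (P j).natDegree) + x)
    (A₀ A₁ : Matrix (Fin n) (Fin n) F)
    (hA₀ : A₀ = Matrix.reindex e e
      (Matrix.blockDiagonal' fun i => companionMatrix ((p i.rev).natDegree) (p i.rev)))
    (hA₁ : A₁ = Matrix.reindex e₂ e₂
      (Matrix.blockDiagonal' fun i => companionMatrix ((P i).natDegree) (P i))) :
    (∃ S : Finset (Fin n), S.card ≤ m ∧ ∀ j ∉ S, ∀ i, A₁ i j = A₀ i j)
    ∧ (A₁ - A₀).rank ≤ m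
    ∧ A₁.charpoly = h * ∏ i ∈ Finset.univ.filter (fun i : Fin s => m ≤ (i : ℕ)), p i.rev := by
  classical
  -- partial sums of degrees, as functions of a natural number cutoff
  set Off : ℕ → ℕ := fun t =>
    ∑ j ∈ Finset.univ.filter (fun j : Fin s => (j : ℕ) < t), (p j.rev).natDegree with hOff_def
  set OffP : ℕ → ℕ := fun t =>
    ∑ j ∈ Finset.univ.filter (fun j : Fin (s - m + 1) => (j : ℕ) < t), (P j).natDegree
    with hOffP_def
  have heOff : ∀ (i : Fin s) (x : Fin ((p i.rev).natDegree)),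
      ((e ⟨i, x⟩ : Fin n) : ℕ) = Off (i : ℕ) + (x : ℕ) := by
    intro i x
    rw [he]
    congr 1
  have heOffP : ∀ (i : Fin (s - m + 1)) (x : Fin ((P i).natDegree)),
      ((e₂ ⟨i, x⟩ : Fin n) : ℕ) = OffP (i : ℕ) + (x : ℕ) := by
    intro i x
    rw [he₂]
    congr 1
  have hOff0 : Off 0 = 0 := by simp [hOff_def]
  have hOffP0 : OffP 0 = 0 := by simp [hOffP_def]
  have hOffsucc : ∀ (t : ℕ) (ht : t < s),
      Off (t + 1) = Off t + (p (⟨t, ht⟩ : Fin s).rev).natDegree := by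
    intro t ht
    simp only [hOff_def]
    have : Finset.univ.filter (fun j : Fin s => (j : ℕ) < t + 1)
        = insert (⟨t, ht⟩ : Fin s) (Finset.univ.filter (fun j : Fin s => (j : ℕ) < t)) := by
      ext j
      simp only [Finset.mem_insert, Finset.mem_filter, Finset.mem_univ, true_and, Fin.ext_iff]
      omega
    rw [this, Finset.sum_insert (by simp)]
    ring
  have hOffPsucc : ∀ (t : ℕ) (ht : t < s - m + 1),
      OffP (t + 1) = OffP t + (P (⟨t, ht⟩ : Fin (s - m + 1))).natDegree := by
    intro t ht
    simp only [hOffP_def]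
    have : Finset.univ.filter (fun j : Fin (s - m + 1) => (j : ℕ) < t + 1)
        = insert (⟨t, ht⟩ : Fin (s - m + 1))
            (Finset.univ.filter (fun j : Fin (s - m + 1) => (j : ℕ) < t)) := by
      ext j
      simp only [Finset.mem_insert, Finset.mem_filter, Finset.mem_univ, true_and, Fin.ext_iff]
      omega
    rw [this, Finset.sum_insert (by simp)]
    ring
  have hOffmono : ∀ a b : ℕ, a ≤ b → Off a ≤ Off b := by
    intro a b hab
    apply Finset.sum_le_sum_of_subset
    intro j hj
    simp only [Finset.mem_filter, Finset.mem_univ, true_and] at hj ⊢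
    omega
  have hP0' : P 0 = h := hP0 0 rfl
  have hPsucc : ∀ (t : ℕ) (ht1 : t + 1 < s - m + 1) (hts : m + t < s),
      P ⟨t + 1, ht1⟩ = p (⟨m + t, hts⟩ : Fin s).rev := by
    intro t ht1 hts
    exact hPs ⟨t + 1, ht1⟩ ⟨m + t, hts⟩ (by simp) (by simp)
  have hKL : ∀ t : ℕ, t ≤ s - m → OffP (t + 1) = Off (m + t) := by
    intro t
    induction t with
    | zero =>
      intro _
      rw [hOffPsucc 0 (by omega), hOffP0, hP0 _ rfl, hhdeg]
      simp [hOff_def]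
    | succ u ihu =>
      intro hu
      have hu' : u ≤ s - m := by omega
      have h1 : u + 1 < s - m + 1 := by omega
      have h2 : m + u < s := by omega
      rw [hOffPsucc (u + 1) (by omega), ihu hu', hPsucc u h1 h2,
        show m + (u + 1) = (m + u) + 1 by omega, hOffsucc (m + u) h2]
  -- representation uniqueness
  have hrep : ∀ (a : Fin n) (i : Fin s) (x : Fin ((p i.rev).natDegree)),
      (a : ℕ) = Off (i : ℕ) + (x : ℕ) → e.symm a = ⟨i, x⟩ := by
    intro a i x hval
    have : e ⟨i, x⟩ = a := by
      apply Fin.ext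
      rw [heOff, hval]
    rw [← this, Equiv.symm_apply_apply]
  have hrep₂ : ∀ (a : Fin n) (i : Fin (s - m + 1)) (x : Fin ((P i).natDegree)),
      (a : ℕ) = OffP (i : ℕ) + (x : ℕ) → e₂.symm a = ⟨i, x⟩ := by
    intro a i x hval
    have : e₂ ⟨i, x⟩ = a := by
      apply Fin.ext
      rw [heOffP, hval]
    rw [← this, Equiv.symm_apply_apply]
  -- entry formulas
  have hE0 : ∀ a b : Fin n, A₀ a b =
      (if (e.symm a).1 = (e.symm b).1 then
        (if ((e.symm b).2 : ℕ) = (p ((e.symm b).1).rev).natDegree - 1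
          then -(p ((e.symm b).1).rev).coeff ((e.symm a).2 : ℕ)
          else if ((e.symm a).2 : ℕ) = ((e.symm b).2 : ℕ) + 1 then 1 else 0)
      else 0) := by
    intro a b
    rw [hA₀, Matrix.reindex_apply, Matrix.submatrix_apply]
    exact blockDiagonal'_companion_apply (fun i : Fin s => p i.rev) _ _
  have hE1 : ∀ a b : Fin n, A₁ a b =
      (if (e₂.symm a).1 = (e₂.symm b).1 then
        (if ((e₂.symm b).2 : ℕ) = (P ((e₂.symm b).1)).natDegree - 1
          then -(P ((e₂.symm b).1)).coeff ((e₂.symm a).2 : ℕ)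
          else if ((e₂.symm a).2 : ℕ) = ((e₂.symm b).2 : ℕ) + 1 then 1 else 0)
      else 0) := by
    intro a b
    rw [hA₁, Matrix.reindex_apply, Matrix.submatrix_apply]
    exact blockDiagonal'_companion_apply P _ _
  have hpart1 : ∃ S : Finset (Fin n), S.card ≤ m ∧ ∀ j ∉ S, ∀ i, A₁ i j = A₀ i j := by
    refine ⟨Finset.image (fun i : Fin s =>
        e ⟨i, ⟨(p i.rev).natDegree - 1, by have := hdeg i.rev; omega⟩⟩)
        (Finset.univ.filter (fun i : Fin s => (i : ℕ) < m)), ?_, ?_⟩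
    · refine le_trans Finset.card_image_le ?_
      have hsub : (Finset.univ.filter (fun i : Fin s => (i : ℕ) < m))
          ⊆ Finset.image (Fin.castLE hm) Finset.univ := by
        intro i hi
        simp only [Finset.mem_filter, Finset.mem_univ, true_and] at hi
        exact Finset.mem_image.mpr ⟨⟨(i : ℕ), hi⟩, Finset.mem_univ _, Fin.ext rfl⟩
      refine le_trans (Finset.card_le_card hsub) (le_trans Finset.card_image_le (by simp))
    · intro j hjS k
      rcases hsj : e.symm j with ⟨i', x'⟩
      rcases hsk : e.symm k with ⟨i, x⟩
      have hj_eq : e ⟨i', x'⟩ = j := by rw [← hsj, Equiv.apply_symm_apply]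
      have hk_eq : e ⟨i, x⟩ = k := by rw [← hsk, Equiv.apply_symm_apply]
      have hjval : (j : ℕ) = Off (i' : ℕ) + (x' : ℕ) := by rw [← hj_eq, heOff]
      have hkval : (k : ℕ) = Off (i : ℕ) + (x : ℕ) := by rw [← hk_eq, heOff]
      have hx'lt : (x' : ℕ) < (p i'.rev).natDegree := x'.isLt
      have hxlt : (x : ℕ) < (p i.rev).natDegree := x.isLt
      have hd' : 1 ≤ (p i'.rev).natDegree := hdeg _
      have hdi : 1 ≤ (p i.rev).natDegree := hdeg _
      have hi's : (i' : ℕ) < s := i'.isLt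
      have his : (i : ℕ) < s := i.isLt
      have hnotlast : (i' : ℕ) < m → (x' : ℕ) ≠ (p i'.rev).natDegree - 1 := by
        intro him hxe
        apply hjS
        refine Finset.mem_image.mpr ⟨i', Finset.mem_filter.mpr ⟨Finset.mem_univ _, him⟩, ?_⟩
        rw [← hj_eq]
        exact congrArg e (congrArg _ (Fin.ext hxe.symm))
      have hOffi'1 : Off ((i' : ℕ) + 1) = Off (i' : ℕ) + (p i'.rev).natDegree := by
        have := hOffsucc (i' : ℕ) hi's
        simpa using this
      have hOffi1 : Off ((i : ℕ) + 1) = Off (i : ℕ) + (p i.rev).natDegree := by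
        have := hOffsucc (i : ℕ) his
        simpa using this
      have hdP0 : (P 0).natDegree = Off m := by rw [hP0', hhdeg]
      -- representation of k in the second enumeration, bottom case
      have hicP : ∀ (hmi : m ≤ (i : ℕ)), P ⟨(i : ℕ) - m + 1, by omega⟩ = p i.rev := by
        intro hmi
        have h1 := hPsucc ((i : ℕ) - m) (by omega) (by omega)
        have h2 : (⟨m + ((i : ℕ) - m), by omega⟩ : Fin s) = i := Fin.ext (by simp; omega)
        rw [h2] at h1
        exact h1
      have hicP' : ∀ (hmi : m ≤ (i' : ℕ)), P ⟨(i' : ℕ) - m + 1, by omega⟩ = p i'.rev := by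
        intro hmi
        have h1 := hPsucc ((i' : ℕ) - m) (by omega) (by omega)
        have h2 : (⟨m + ((i' : ℕ) - m), by omega⟩ : Fin s) = i' := Fin.ext (by simp; omega)
        rw [h2] at h1
        exact h1
      have hOffPic : ∀ t : ℕ, m ≤ t → t < s → OffP (t - m + 1) = Off t := by
        intro t h1t h2t
        have h1 := hKL (t - m) (by omega)
        have h2 : m + (t - m) = t := by omega
        rw [h2] at h1
        exact h1
      by_cases hi'm : (i' : ℕ) < m
      · -- column in the top-left part; it is not the last column of its block
        have hx'ne := hnotlast hi'm
        have hx'1 : (x' : ℕ) + 1 < (p i'.rev).natDegree := by omega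
        have hjm : (j : ℕ) + 1 < Off m := by
          have h1 : Off ((i' : ℕ) + 1) ≤ Off m := hOffmono _ _ (by omega)
          omega
        have hs2j : e₂.symm j = ⟨0, ⟨(j : ℕ), by rw [hdP0]; omega⟩⟩ :=
          hrep₂ j 0 _ (by simp [hOffP0])
        by_cases him : (i : ℕ) < m
        · have hkm : (k : ℕ) < Off m := by
            have h1 : Off ((i : ℕ) + 1) ≤ Off m := hOffmono _ _ (by omega)
            omega
          have hs2k : e₂.symm k = ⟨0, ⟨(k : ℕ), by rw [hdP0]; omega⟩⟩ :=
            hrep₂ k 0 _ (by simp [hOffP0])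
          rw [hE1 k j, hE0 k j, hsj, hsk, hs2j, hs2k]
          dsimp only
          rw [if_pos rfl, if_neg (by rw [hdP0]; omega)]
          by_cases hii : i = i'
          · subst hii
            rw [if_pos rfl, if_neg hx'ne]
            have hiff : (k : ℕ) = (j : ℕ) + 1 ↔ (x : ℕ) = (x' : ℕ) + 1 := by omega
            by_cases hc : (x : ℕ) = (x' : ℕ) + 1
            · rw [if_pos (hiff.mpr hc), if_pos hc]
            · rw [if_neg (fun hc2 => hc (hiff.mp hc2)), if_neg hc]
          · rw [if_neg hii, if_neg ?_]
            intro hc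
            have hrk : e.symm k = ⟨i', ⟨(x' : ℕ) + 1, hx'1⟩⟩ := hrep k i' _ (by simp; omega)
            rw [hsk] at hrk
            exact hii (congrArg Sigma.fst hrk)
        · -- row in the bottom part, column in the top part: both entries vanish
          have hmi : m ≤ (i : ℕ) := by omega
          have hs2k : e₂.symm k =
              ⟨⟨(i : ℕ) - m + 1, by omega⟩, ⟨(x : ℕ), by rw [hicP hmi]; exact hxlt⟩⟩ := by
            refine hrep₂ k _ _ ?_
            have h1 := hOffPic (i : ℕ) hmi his
            simp only []
            omega
          rw [hE1 k j, hE0 k j, hsj, hsk, hs2j, hs2k]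
          dsimp only
          rw [if_neg (by intro hc; have := congrArg Fin.val hc; simp at this),
            if_neg (by intro hc; have := congrArg Fin.val hc; omega)]
      · -- column in the bottom part
        have hmi' : m ≤ (i' : ℕ) := by omega
        have hs2j : e₂.symm j =
            ⟨⟨(i' : ℕ) - m + 1, by omega⟩, ⟨(x' : ℕ), by rw [hicP' hmi']; exact hx'lt⟩⟩ := by
          refine hrep₂ j _ _ ?_
          have h1 := hOffPic (i' : ℕ) hmi' hi's
          simp only []
          omega
        by_cases him : (i : ℕ) < m
        · have hkm : (k : ℕ) < Off m := by
            have h1 : Off ((i : ℕ) + 1) ≤ Off m := hOffmono _ _ (by omega)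
            omega
          have hs2k : e₂.symm k = ⟨0, ⟨(k : ℕ), by rw [hdP0]; omega⟩⟩ :=
            hrep₂ k 0 _ (by simp [hOffP0])
          rw [hE1 k j, hE0 k j, hsj, hsk, hs2j, hs2k]
          dsimp only
          rw [if_neg (by intro hc; have := congrArg Fin.val hc; simp only [Fin.val_zero] at this; omega),
            if_neg (by intro hc; have := congrArg Fin.val hc; omega)]
        · have hmi : m ≤ (i : ℕ) := by omega
          have hs2k : e₂.symm k =
              ⟨⟨(i : ℕ) - m + 1, by omega⟩, ⟨(x : ℕ), by rw [hicP hmi]; exact hxlt⟩⟩ := by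
            refine hrep₂ k _ _ ?_
            have h1 := hOffPic (i : ℕ) hmi his
            simp only []
            omega
          rw [hE1 k j, hE0 k j, hsj, hsk, hs2j, hs2k]
          dsimp only
          by_cases hii : i = i'
          · subst hii
            rw [if_pos rfl, if_pos rfl]
            simp only [Fin.val_mk, hicP hmi]
          · rw [if_neg hii, if_neg ?_]
            intro hc
            have := congrArg Fin.val hc
            simp only [] at this
            exact hii (Fin.ext (by omega))
  refine ⟨hpart1, ?_, ?_⟩
  · obtain ⟨S, hS1, hS2⟩ := hpart1
    refine le_trans (rank_le_card_of_cols_zero _ S fun j hj i2 => ?_) hS1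
    rw [Matrix.sub_apply, hS2 j hj i2, sub_self]
  · have hPmon : ∀ i2 : Fin (s - m + 1), (P i2).Monic := by
      intro i2
      rcases Nat.eq_zero_or_pos (i2 : ℕ) with h0 | hpos
      · rw [hP0 i2 h0]; exact hh
      · have hlt : m + (i2 : ℕ) - 1 < s := by have := i2.isLt; omega
        rw [hPs i2 ⟨m + (i2 : ℕ) - 1, hlt⟩ hpos rfl]
        exact hmon _
    have hcp : A₁.charpoly = ∏ i2 : Fin (s - m + 1), P i2 := by
      rw [hA₁, Matrix.charpoly_reindex, my_charpoly_blockDiagonal']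
      exact Finset.prod_congr rfl fun i2 _ => charpoly_companionMatrix _ _ (hPmon i2) rfl
    rw [hcp, Fin.prod_univ_succ, hP0 0 rfl]
    congr 1
    refine Finset.prod_bij'
      (fun (j2 : Fin (s - m)) _ => (⟨m + (j2 : ℕ), by have := j2.isLt; omega⟩ : Fin s))
      (fun (i2 : Fin s) hi2 => (⟨(i2 : ℕ) - m, by
        have := i2.isLt
        simp only [Finset.mem_filter, Finset.mem_univ, true_and] at hi2
        omega⟩ : Fin (s - m)))
      (fun j2 _ => by simp)
      (fun i2 hi2 => Finset.mem_univ _)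
      (fun j2 _ => Fin.ext (by simp))
      (fun i2 hi2 => Fin.ext (by
        simp only [Finset.mem_filter, Finset.mem_univ, true_and] at hi2
        simp
        omega))
      (fun j2 _ => by
        have := hPsucc (j2 : ℕ) (by have := j2.isLt; omega) (by have := j2.isLt; omega)
        exact this)
end

section
/- Rank-one case: let A be an n×n matrix over a field F whose rational canonical form has invariant factors p_1 | ... | p_s, and let q ∈ F[x] be monic of degree n. There exists a rank ≤ 1 matrix B over F with char poly of A+B equal to q if and only if p_1·p_2···p_{s−1} divides q. -/
open Matrix Polynomial Finset

section aux

variable {R : Type*} [CommRing R] {m : Type*} [Fintype m] [DecidableEq m]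

lemma det_addCols (M : Matrix m m R) (u v : m → R) (S : Finset m) :
    (Matrix.of fun i j => M i j + if j ∈ S then u i * v j else 0).det
      = M.det + ∑ j ∈ S, v j * (M.updateCol j u).det := by
  induction S using Finset.induction_on generalizing M with
  | empty => simp; rfl
  | @insert k S hk IH =>
    have hX : (Matrix.of fun i j => M i j + if j ∈ insert k S then u i * v j else 0)
        = (Matrix.of fun i j => M i j + if j ∈ S then u i * v j else 0).updateCol k
            ((fun i => M i k) + fun i => v k * u i) := by
      ext i j
      by_cases h : j = k
      · subst h
        simp [Matrix.updateCol_self, hk, mul_comm]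
      · simp [Matrix.updateCol_ne h, h]
    have h1 : ((Matrix.of fun i j => M i j + if j ∈ S then u i * v j else 0).updateCol k
        (fun i => M i k)) = (Matrix.of fun i j => M i j + if j ∈ S then u i * v j else 0) := by
      ext i j
      by_cases h : j = k
      · subst h; simp [Matrix.updateCol_self, hk]
      · simp [Matrix.updateCol_ne h]
    have h2 : ((Matrix.of fun i j => M i j + if j ∈ S then u i * v j else 0).updateCol k u)
        = (Matrix.of fun i j => (M.updateCol k u) i j + if j ∈ S then u i * v j else 0) := by
      ext i j
      by_cases h : j = k
      · subst h; simp [Matrix.updateCol_self, hk]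
      · simp [Matrix.updateCol_ne h, h]
    have hsmul : ((Matrix.of fun i j => M i j + if j ∈ S then u i * v j else 0).updateCol k
        (fun i => v k * u i)).det = v k *
        ((Matrix.of fun i j => M i j + if j ∈ S then u i * v j else 0).updateCol k u).det := by
      have := Matrix.det_updateCol_smul
        (Matrix.of fun i j => M i j + if j ∈ S then u i * v j else 0) k (v k) u
      simpa [Pi.smul_def, smul_eq_mul] using this
    rw [hX, Matrix.det_updateCol_add, h1, hsmul, h2, IH, IH (M.updateCol k u)]
    have hz : ∀ j ∈ S, v j * ((M.updateCol k u).updateCol j u).det = 0 := by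
      intro j hj
      have hjk : j ≠ k := fun h => hk (h ▸ hj)
      have : ((M.updateCol k u).updateCol j u).det = 0 := by
        apply Matrix.det_zero_of_column_eq hjk.symm
        intro i
        rw [Matrix.updateCol_self, Matrix.updateCol_ne (Ne.symm hjk),
          Matrix.updateCol_self]
      rw [this, mul_zero]
    rw [Finset.sum_congr rfl hz, Finset.sum_const_zero, add_zero,
      Finset.sum_insert hk]
    ring

lemma det_add_vecMulVec (M : Matrix m m R) (u v : m → R) :
    (M + Matrix.vecMulVec u v).det = M.det + ∑ j, v j * (M.updateCol j u).det := by
  have := det_addCols M u v Finset.univ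
  simp only [Finset.mem_univ, if_true] at this
  rw [← this]
  congr 1

variable {R : Type*} [CommRing R]

/-- generalized companion charmatrix -/
noncomputable def Gmat (d : ℕ) (c : Fin d → R) : Matrix (Fin d) (Fin d) R[X] :=
  Matrix.of fun i j =>
    if (j : ℕ) = d - 1 then (if i = j then X + C (c i) else C (c i))
    else if i = j then X else if (i : ℕ) = (j : ℕ) + 1 then -1 else 0

lemma det_Gmat : ∀ (d : ℕ) (c : Fin d → R), 1 ≤ d →
    (Gmat d c).det = X ^ d + ∑ i : Fin d, C (c i) * X ^ (i : ℕ) := by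
  intro d
  induction d with
  | zero => intro c h; omega
  | succ k IH =>
    intro c _
    rcases Nat.eq_zero_or_pos k with hk | hk
    · subst hk
      rw [Matrix.det_fin_one]
      simp [Gmat, Fin.sum_univ_one]
    -- k ≥ 1
    rw [Matrix.det_succ_row_zero]
    have hlast : ((⟨k, Nat.lt_succ_self k⟩ : Fin (k+1)) : ℕ) = k := rfl
    have hne : (0 : Fin (k+1)) ≠ ⟨k, Nat.lt_succ_self k⟩ := by
      intro h; apply absurd (congrArg (Fin.val) h); simp; omega
    rw [Finset.sum_eq_add_of_mem (0 : Fin (k+1)) ⟨k, Nat.lt_succ_self k⟩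
      (Finset.mem_univ _) (Finset.mem_univ _) hne ?_]
    · -- two main terms
      have hj := fun (j : Fin k) => j.isLt
      have hm1 : (Gmat (k+1) c).submatrix Fin.succ ((0 : Fin (k+1)).succAbove)
          = Gmat k (fun i => c i.succ) := by
        ext i j
        have hjk := j.isLt
        have e1 : ((j.succ : Fin (k+1)) : ℕ) = (k+1) - 1 ↔ (j : ℕ) = k - 1 := by
          rw [Fin.val_succ]; omega
        have e2 : (i.succ = j.succ) ↔ i = j := Fin.succ_inj
        have e3 : ((i.succ : Fin (k+1)) : ℕ) = ((j.succ : Fin (k+1)) : ℕ) + 1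
            ↔ (i : ℕ) = (j : ℕ) + 1 := by simp [Fin.val_succ]
        simp only [Gmat, Matrix.of_apply, Matrix.submatrix_apply, Fin.zero_succAbove, e1, e2, e3]
      have hE00 : Gmat (k+1) c 0 0 = X := by
        have h0 : ¬((0 : ℕ) = k) := by omega
        simp [Gmat, h0]
      have hE0l : Gmat (k+1) c 0 ⟨k, Nat.lt_succ_self k⟩ = C (c 0) := by
        have h2 : ¬((0 : Fin (k+1)) = ⟨k, Nat.lt_succ_self k⟩) := hne
        simp [Gmat, h2]
      have hm2 : ((Gmat (k+1) c).submatrix Fin.succ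
          ((⟨k, Nat.lt_succ_self k⟩ : Fin (k+1)).succAbove)).det = (-1) ^ k := by
        have hsa : (⟨k, Nat.lt_succ_self k⟩ : Fin (k+1)).succAbove = Fin.castSucc := by
          exact Fin.succAbove_last
        rw [hsa]
        have hT : ((Gmat (k+1) c).submatrix Fin.succ Fin.castSucc) =
            Matrix.of (fun i j : Fin k =>
              if (j : ℕ) = (i : ℕ) + 1 then X else if i = j then (-1 : R[X]) else 0) := by
          ext i j
          have hjk := j.isLt
          have h1 : ¬(((j.castSucc : Fin (k+1)) : ℕ) = (k+1) - 1) := by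
            simp [Fin.coe_castSucc]; omega
          have e2 : (i.succ = j.castSucc) ↔ (j : ℕ) = (i : ℕ) + 1 := by
            rw [Fin.ext_iff]; simp [Fin.val_succ, eq_comm]
          have e3 : ((i.succ : Fin (k+1)) : ℕ) = ((j.castSucc : Fin (k+1)) : ℕ) + 1
              ↔ i = j := by rw [Fin.ext_iff]; simp [Fin.val_succ]
          simp only [Gmat, Matrix.of_apply, Matrix.submatrix_apply, h1, if_false, e2, e3]
        rw [hT]
        have htri : Matrix.BlockTriangular (Matrix.of (fun i j : Fin k =>
            if (j : ℕ) = (i : ℕ) + 1 then X else if i = j then (-1 : R[X]) else 0)) id := by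
          intro i j hij
          have : (j : ℕ) < (i : ℕ) := hij
          have h1 : ¬((j : ℕ) = (i : ℕ) + 1) := by omega
          have h2 : ¬(i = j) := by rw [Fin.ext_iff]; omega
          simp [h1, h2]
        rw [Matrix.det_of_upperTriangular htri]
        simp
      rw [hm1, hE00, hE0l, hm2, IH _ hk]
      rw [Fin.sum_univ_succ (fun i : Fin (k+1) => C (c i) * X ^ (i : ℕ))]
      have hsgn : ((-1 : R[X]) ^ (((⟨k, Nat.lt_succ_self k⟩ : Fin (k+1))) : ℕ)) * C (c 0) * (-1) ^ k
          = C (c 0) := by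
        rw [hlast, mul_comm, ← mul_assoc, ← pow_add]
        have : Even (k + k) := ⟨k, rfl⟩
        rw [this.neg_one_pow, one_mul]
      rw [Fin.val_zero, pow_zero, one_mul, hsgn]
      rw [mul_add, Finset.mul_sum]
      have : ∀ i : Fin k, X * (C (c i.succ) * X ^ (i : ℕ))
          = C (c i.succ) * X ^ ((i.succ : Fin (k+1)) : ℕ) := by
        intro i; rw [Fin.val_succ, pow_succ]; ring
      rw [Finset.sum_congr rfl (fun i _ => this i)]
      rw [← pow_succ']
      ring
    · -- other terms vanish
      intro j _ hj
      have h1 : (j : ℕ) ≠ 0 := fun h => hj.1 (by ext; simpa using h)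
      have h2 : (j : ℕ) ≠ k := fun h => hj.2 (by ext; simpa using h)
      have hA : ¬((j : ℕ) = (k+1) - 1) := by simpa using h2
      have hB : ¬((0 : Fin (k+1)) = j) := by
        intro h; exact h1 (by simp [← h])
      have hC : ¬(((0 : Fin (k+1)) : ℕ) = (j : ℕ) + 1) := by simp
      have : Gmat (k+1) c 0 j = 0 := by simp [Gmat, hA, h2, hB, hC]
      rw [this, mul_zero, zero_mul]

lemma charmatrix_companion {F : Type*} [Field F] (d : ℕ) (p : Polynomial F) :
    Matrix.charmatrix (companionMatrix d p) = Gmat d (fun i => p.coeff i) := by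
  ext i j
  rw [Matrix.charmatrix_apply]
  by_cases hA : (j : ℕ) = d - 1
  · by_cases hij : i = j
    · subst hij
      simp [companionMatrix, Gmat, hA, Matrix.diagonal_apply_eq]
    · simp [companionMatrix, Gmat, hA, hij, Matrix.diagonal_apply_ne _ hij]
  · by_cases hij : i = j
    · subst hij
      have hsub : ¬((i : ℕ) = (i : ℕ) + 1) := by omega
      simp [companionMatrix, Gmat, hA, hsub, Matrix.diagonal_apply_eq]
    · by_cases hsub : (i : ℕ) = (j : ℕ) + 1
      · simp [companionMatrix, Gmat, hA, hij, hsub, Matrix.diagonal_apply_ne _ hij]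
      · simp [companionMatrix, Gmat, hA, hij, hsub, Matrix.diagonal_apply_ne _ hij]

lemma charpoly_companion {F : Type*} [Field F] (p : Polynomial F) (hp : p.Monic)
    (hd : 1 ≤ p.natDegree) :
    (companionMatrix p.natDegree p).charpoly = p := by
  rw [Matrix.charpoly, charmatrix_companion, det_Gmat _ _ hd]
  rw [Fin.sum_univ_eq_sum_range (fun i => C (p.coeff i) * X ^ i) p.natDegree]
  exact (hp.as_sum).symm

lemma det_blockDiagonal'' {R : Type*} [CommRing R] {s : ℕ} {d : Fin s → ℕ}
    (N : ∀ i, Matrix (Fin (d i)) (Fin (d i)) R) :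
    (Matrix.blockDiagonal' N).det = ∏ i, (N i).det := by
  rw [Matrix.BlockTriangular.det_fintype (Matrix.blockTriangular_blockDiagonal' N)]
  congr 1
  ext k
  -- toSquareBlock equals reindexed N k
  let g : Fin (d k) ≃ {x : Σ i : Fin s, Fin (d i) // x.1 = k} :=
    { toFun := fun m => ⟨⟨k, m⟩, rfl⟩
      invFun := fun x => Fin.cast (congrArg d x.2) x.1.2
      left_inv := fun m => rfl
      right_inv := by rintro ⟨⟨k', m⟩, (h : k' = k)⟩; subst h; rfl }
  have : (Matrix.blockDiagonal' N).toSquareBlock Sigma.fst k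
      = (N k).submatrix g.symm g.symm := by
    ext x y
    rcases x with ⟨⟨kx, mx⟩, (hx : kx = k)⟩
    rcases y with ⟨⟨ky, my⟩, (hy : ky = k)⟩
    subst hx; subst hy
    simp [Matrix.toSquareBlock_def, Matrix.blockDiagonal'_apply_eq, g]
  rw [this, Matrix.det_submatrix_equiv_self]

lemma charmatrix_blockDiagonal' {R : Type*} [CommRing R] {s : ℕ} {d : Fin s → ℕ}
    (N : ∀ i, Matrix (Fin (d i)) (Fin (d i)) R) :
    Matrix.charmatrix (Matrix.blockDiagonal' N)
      = Matrix.blockDiagonal' (fun i => Matrix.charmatrix (N i)) := by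
  apply Matrix.ext
  rintro ⟨kx, mx⟩ ⟨ky, my⟩
  by_cases h : kx = ky
  · subst h
    by_cases hm : mx = my
    · subst hm
      simp [Matrix.charmatrix_apply_eq, Matrix.blockDiagonal'_apply_eq]
    · have hne : (⟨kx, mx⟩ : Σ i : Fin s, Fin (d i)) ≠ ⟨kx, my⟩ := by
        simp [Sigma.ext_iff, hm]
      simp [Matrix.charmatrix_apply_ne _ _ _ hne, Matrix.blockDiagonal'_apply_eq,
        Matrix.charmatrix_apply_ne _ _ _ hm]
  · have hne : (⟨kx, mx⟩ : Σ i : Fin s, Fin (d i)) ≠ ⟨ky, my⟩ := by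
      simp [Sigma.ext_iff, h]
    simp [Matrix.charmatrix_apply_ne _ _ _ hne, Matrix.blockDiagonal'_apply_ne _ _ _ h]

lemma charpoly_blockDiagonal' {R : Type*} [CommRing R] {s : ℕ} {d : Fin s → ℕ}
    (N : ∀ i, Matrix (Fin (d i)) (Fin (d i)) R) :
    (Matrix.blockDiagonal' N).charpoly = ∏ i, (N i).charpoly := by
  rw [Matrix.charpoly, charmatrix_blockDiagonal', det_blockDiagonal'']
  rfl

lemma adj_blockDiagonal'_dvd {R : Type*} [CommRing R] [IsDomain R] {s : ℕ} {d : Fin s → ℕ}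
    (Ms : ∀ k, Matrix (Fin (d k)) (Fin (d k)) R)
    (g : R)
    (hg : ∀ b : Fin s, g ∣ ∏ k ∈ Finset.univ.erase b, (Ms k).det)
    (hnz : ∀ k, (Ms k).det ≠ 0) :
    ∀ i j, g ∣ (Matrix.adjugate (Matrix.blockDiagonal' Ms)) i j := by
  rintro ⟨a, c⟩ ⟨b, r⟩
  rw [Matrix.adjugate_apply]
  by_cases hab : a = b
  · subst hab
    -- same block
    have hupd : (Matrix.blockDiagonal' Ms).updateRow ⟨a, r⟩
          (Pi.single (⟨a, c⟩ : Σ k, Fin (d k)) 1)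
        = Matrix.blockDiagonal'
          (Function.update Ms a ((Ms a).updateRow r (Pi.single c 1))) := by
      apply Matrix.ext
      rintro ⟨k, m⟩ ⟨k', m'⟩
      by_cases hk : (⟨k, m⟩ : Σ k, Fin (d k)) = ⟨a, r⟩
      · rw [hk, Matrix.updateRow_self]
        rcases Sigma.mk.inj_iff.mp hk with ⟨hk1, _⟩
        by_cases hk' : k' = a
        · subst hk'
          rw [Matrix.blockDiagonal'_apply_eq, Function.update_self, Matrix.updateRow_self]
          by_cases hc : m' = c
          · subst hc; simp
          · rw [Pi.single_eq_of_ne (by simp [Sigma.ext_iff]; exact hc) 1,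
              Pi.single_eq_of_ne hc 1]
        · rw [Matrix.blockDiagonal'_apply_ne _ _ _ (Ne.symm hk')]
          rw [Pi.single_eq_of_ne (by
            simp only [ne_eq, Sigma.ext_iff, not_and]
            intro h
            first
            | exact absurd h hk'
            | exact absurd h.symm hk') 1]
      · rw [Matrix.updateRow_ne hk]
        by_cases hkk : k = k'
        · subst hkk
          rw [Matrix.blockDiagonal'_apply_eq, Matrix.blockDiagonal'_apply_eq]
          by_cases hka : k = a
          · subst hka
            rw [Function.update_self]
            have hmr : m ≠ r := by
              intro h; exact hk (by rw [h])
            rw [Matrix.updateRow_ne hmr]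
          · rw [Function.update_of_ne hka]
        · rw [Matrix.blockDiagonal'_apply_ne _ _ _ hkk,
            Matrix.blockDiagonal'_apply_ne _ _ _ hkk]
    rw [hupd, det_blockDiagonal'']
    rw [← Finset.mul_prod_erase Finset.univ _ (Finset.mem_univ a)]
    have herase : ∏ k ∈ Finset.univ.erase a,
        (Function.update Ms a ((Ms a).updateRow r (Pi.single c 1)) k).det
        = ∏ k ∈ Finset.univ.erase a, (Ms k).det :=
      Finset.prod_congr rfl (fun k hk => by
        rw [Function.update_of_ne (Finset.ne_of_mem_erase hk)])
    rw [herase]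
    exact Dvd.dvd.mul_left (hg a) _
  · -- different blocks: determinant is zero
    set M' := (Matrix.blockDiagonal' Ms).updateRow ⟨b, r⟩
      (Pi.single (⟨a, c⟩ : Σ k, Fin (d k)) 1) with hM'
    have hdet : M'.det = 0 := by
      rw [← Matrix.exists_mulVec_eq_zero_iff]
      refine ⟨fun x => if h : x.1 = b then
        Matrix.adjugate (Ms b) (Fin.cast (congrArg d h) x.2) r else 0, ?_, ?_⟩
      · -- nonzero
        intro hv
        have hw : ∀ m : Fin (d b), Matrix.adjugate (Ms b) m r = 0 := by
          intro m
          have := congrFun hv ⟨b, m⟩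
          simpa using this
        have := congrFun (congrFun (Matrix.mul_adjugate (Ms b)) r) r
        rw [Matrix.mul_apply] at this
        simp only [hw, mul_zero, Finset.sum_const_zero] at this
        simp at this
        exact hnz b this.symm
      · -- mulVec is zero
        funext x
        rcases x with ⟨k, m'⟩
        rw [Matrix.mulVec, dotProduct, Pi.zero_apply]
        rw [← Finset.univ_sigma_univ, Finset.sum_sigma]
        have hinner : ∀ k' : Fin s, k' ≠ b →
            (∑ m : Fin (d k'), M' ⟨k, m'⟩ ⟨k', m⟩ *
              (if h : (⟨k', m⟩ : Σ k, Fin (d k)).1 = b then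
                Matrix.adjugate (Ms b) (Fin.cast (congrArg d h) m) r else 0)) = 0 := by
          intro k' hk'
          apply Finset.sum_eq_zero
          intro m _
          rw [dif_neg hk', mul_zero]
        rw [Finset.sum_eq_single_of_mem b (Finset.mem_univ b)
          (fun k' _ h => hinner k' h)]
        have hsimp : (∑ m : Fin (d b), M' ⟨k, m'⟩ ⟨b, m⟩ *
            (if h : (⟨b, m⟩ : Σ k, Fin (d k)).1 = b then
              Matrix.adjugate (Ms b) (Fin.cast (congrArg d h) m) r else 0))
            = ∑ m : Fin (d b), M' ⟨k, m'⟩ ⟨b, m⟩ * Matrix.adjugate (Ms b) m r := by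
          apply Finset.sum_congr rfl
          intro m _
          rw [dif_pos rfl]
          congr 1
        rw [hsimp]
        by_cases hk : k = b
        · subst hk
          by_cases hm : m' = r
          · have hz : ∀ m, M' ⟨k, m'⟩ ⟨k, m⟩ = 0 := by
              intro m
              rw [hM', hm, Matrix.updateRow_self]
              exact Pi.single_eq_of_ne (by
                simp only [ne_eq, Sigma.ext_iff, not_and]
                intro h
                first | exact absurd h hab | exact absurd h.symm hab) 1
            simp [hz]
          · have hrow : ∀ m, M' ⟨k, m'⟩ ⟨k, m⟩ = Ms k m' m := by
              intro m
              rw [hM', Matrix.updateRow_ne (by simp [Sigma.ext_iff]; exact fun h => absurd h hm),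
                Matrix.blockDiagonal'_apply_eq]
            simp only [hrow]
            have hma := congrFun (congrFun (Matrix.mul_adjugate (Ms k)) m') r
            rw [Matrix.mul_apply] at hma
            rw [hma]
            simp [Matrix.one_apply, hm]
        · have hrow : ∀ m, M' ⟨k, m'⟩ ⟨b, m⟩ = 0 := by
            intro m
            rw [hM', Matrix.updateRow_ne (by simp [Sigma.ext_iff]; exact fun h => absurd h hk),
              Matrix.blockDiagonal'_apply_ne _ _ _ hk]
          simp [hrow]
    rw [hdet]
    exact dvd_zero g

section rankstuff
variable {F : Type*} [Field F] {m : Type*} [Fintype m] [DecidableEq m]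

lemma rank_vecMulVec_le_one (u v : m → F) : (Matrix.vecMulVec u v).rank ≤ 1 := by
  rw [Matrix.rank]
  have hr : LinearMap.range (Matrix.vecMulVec u v).mulVecLin
      ≤ Submodule.span F {u} := by
    rintro y ⟨x, rfl⟩
    rw [Submodule.mem_span_singleton]
    refine ⟨∑ j, v j * x j, ?_⟩
    funext i
    simp [Matrix.mulVecLin_apply, Matrix.mulVec, dotProduct,
      Matrix.vecMulVec_apply, Finset.mul_sum, Finset.sum_mul, mul_assoc, mul_comm, mul_left_comm]
  refine le_trans (Submodule.finrank_mono hr) ?_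
  refine le_trans (finrank_span_le_card _) ?_
  simp

lemma rank_le_one_exists_vecMulVec {B : Matrix m m F} (hB : B.rank ≤ 1) :
    ∃ u v : m → F, B = Matrix.vecMulVec u v := by
  rw [Matrix.rank] at hB
  rw [finrank_le_one_iff] at hB
  obtain ⟨⟨u, hu⟩, hspan⟩ := hB
  choose c hc using fun (w : LinearMap.range B.mulVecLin) => hspan w
  have hcol : ∀ j : m, ∃ cj : F, cj • u = fun i => B i j := by
    intro j
    have hmem : (fun i => B i j) ∈ LinearMap.range B.mulVecLin := by
      refine ⟨Pi.single j 1, ?_⟩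
      rw [Matrix.mulVecLin_apply, Matrix.mulVec_single]
      funext i; simp
    obtain ⟨cj, hcj⟩ := hspan ⟨_, hmem⟩
    exact ⟨cj, by simpa using congrArg Subtype.val hcj⟩
  choose w hw using hcol
  refine ⟨u, w, ?_⟩
  ext i j
  have := congrFun (hw j) i
  simp only [Pi.smul_apply, smul_eq_mul] at this
  rw [Matrix.vecMulVec_apply, ← this, mul_comm]

end rankstuff

section erasedvd
variable {F : Type*} [Field F]

lemma filter_lt_eq_erase_last {s : ℕ} (hs : 1 ≤ s) :
    Finset.univ.filter (fun i : Fin s => (i : ℕ) < s - 1)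
      = Finset.univ.erase ⟨s - 1, by omega⟩ := by
  ext i
  have := i.isLt
  simp [Finset.mem_erase, Fin.ext_iff]
  omega

lemma g_dvd_prod_erase {s : ℕ} (p : Fin s → Polynomial F)
    (hdvd : ∀ i j : Fin s, i ≤ j → p i ∣ p j) (b : Fin s) :
    (∏ i ∈ Finset.univ.filter (fun i : Fin s => (i : ℕ) < s - 1), p i)
      ∣ ∏ k ∈ Finset.univ.erase b, p k := by
  have hs : 1 ≤ s := by have := b.isLt; omega
  set last : Fin s := ⟨s - 1, by omega⟩ with hlast
  rw [filter_lt_eq_erase_last hs]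
  by_cases hb : b = last
  · rw [hb]
  · have hbl : last ∈ Finset.univ.erase b := by
      simp [Finset.mem_erase]
      exact fun h => hb h.symm
    have hlb : b ∈ Finset.univ.erase last := by
      simp [Finset.mem_erase, hb]
    rw [← Finset.mul_prod_erase _ _ hbl, ← Finset.mul_prod_erase _ _ hlb]
    rw [Finset.erase_right_comm]
    exact mul_dvd_mul (hdvd b last (by
      rw [Fin.le_def]
      have := b.isLt
      simp [hlast]
      omega)) dvd_rfl

end erasedvd

section conj
variable {F : Type*} [Field F] {m : Type*} [Fintype m] [DecidableEq m]

lemma charmatrix_conj (P M : Matrix m m F) (hP : IsUnit P.det) :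
    Matrix.charmatrix (P * M * P⁻¹)
      = (C : F →+* F[X]).mapMatrix P * Matrix.charmatrix M
          * (C : F →+* F[X]).mapMatrix P⁻¹ := by
  have h1 : (C : F →+* F[X]).mapMatrix P * (C : F →+* F[X]).mapMatrix P⁻¹ = 1 := by
    rw [← _root_.map_mul, Matrix.mul_nonsing_inv P hP, _root_.map_one]
  unfold Matrix.charmatrix
  rw [Matrix.mul_sub, Matrix.sub_mul]
  congr 1
  · rw [Matrix.mul_assoc,
      (Matrix.scalar_commute X (fun r => Commute.all X r)
        ((C : F →+* F[X]).mapMatrix P⁻¹)).eq, ← Matrix.mul_assoc, h1, Matrix.one_mul]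
  · rw [← _root_.map_mul, ← _root_.map_mul]

lemma charpoly_conj (P M : Matrix m m F) (hP : IsUnit P.det) :
    (P * M * P⁻¹).charpoly = M.charpoly := by
  have h1 : ((C : F →+* F[X]).mapMatrix P).det * ((C : F →+* F[X]).mapMatrix P⁻¹).det = 1 := by
    rw [← Matrix.det_mul, ← _root_.map_mul, Matrix.mul_nonsing_inv P hP, _root_.map_one,
      Matrix.det_one]
  rw [Matrix.charpoly, charmatrix_conj P M hP, Matrix.det_mul, Matrix.det_mul,
    show ∀ a b c : F[X], a * b * c = b * (a * c) from fun a b c => by ring, h1, mul_one,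
    Matrix.charpoly]

end conj

end aux

set_option maxHeartbeats 1600000 in
/-- Rank-one case: if `A` is an `n×n` matrix over `F` whose rational canonical form has
invariant factors `p 0 ∣ p 1 ∣ ⋯ ∣ p (s-1)` and `q` is monic of degree `n`, then there is
a rank `≤ 1` matrix `B` over `F` with `charpoly (A+B) = q` iff `p 0 ⋯ p (s-2) ∣ q`. -/
theorem stmt_17 {F : Type*} [Field F] {n s : ℕ}
    (p : Fin s → Polynomial F) (hmon : ∀ i, (p i).Monic)
    (hdeg : ∀ i, 1 ≤ (p i).natDegree)
    (hdvd : ∀ i j : Fin s, i ≤ j → p i ∣ p j)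
    (A : Matrix (Fin n) (Fin n) F)
    (e : (Σ i : Fin s, Fin ((p i).natDegree)) ≃ Fin n)
    (P : Matrix (Fin n) (Fin n) F) (hP : IsUnit P.det)
    (hA : A = P * Matrix.reindex e e
      (Matrix.blockDiagonal' fun i => companionMatrix ((p i).natDegree) (p i)) * P⁻¹)
    (q : Polynomial F) (hq : q.Monic) (hqdeg : q.natDegree = n) :
    (∃ B : Matrix (Fin n) (Fin n) F, B.rank ≤ 1 ∧ (A + B).charpoly = q)
    ↔ (∏ i ∈ Finset.univ.filter (fun i : Fin s => (i : ℕ) < s - 1), p i) ∣ q := by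
  classical
  rcases Nat.eq_zero_or_pos s with hs0 | hs
  · -- degenerate case s = 0
    subst hs0
    have hn : n = 0 := by
      by_contra hn
      exact (e.symm ⟨0, Nat.pos_of_ne_zero hn⟩).1.elim0
    subst hn
    have hq1 : q = 1 := hq.natDegree_eq_zero.mp hqdeg
    constructor
    · intro _
      simp
    · intro _
      refine ⟨0, ?_, ?_⟩
      · exact le_trans (Matrix.rank_le_card_width 0) (by simp)
      · rw [hq1, Matrix.charpoly, Matrix.det_isEmpty]
  -- main case
  have hlt : s - 1 < s := by omega
  set last : Fin s := ⟨s - 1, hlt⟩ with hlastdef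
  set g : Polynomial F :=
    ∏ i ∈ Finset.univ.filter (fun i : Fin s => (i : ℕ) < s - 1), p i with hgdef
  have hglast : g = ∏ k ∈ Finset.univ.erase last, p k := by
    rw [hgdef, filter_lt_eq_erase_last hs]
  have hcp : ∀ k : Fin s, (companionMatrix ((p k).natDegree) (p k)).charpoly = p k :=
    fun k => charpoly_companion (p k) (hmon k) (hdeg k)
  have hpA : A.charpoly = ∏ k, p k := by
    rw [hA, charpoly_conj _ _ hP, Matrix.charpoly_reindex, charpoly_blockDiagonal']
    exact Finset.prod_congr rfl (fun k _ => hcp k)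
  have hgA : g ∣ A.charpoly := by
    rw [hpA, hglast, ← Finset.mul_prod_erase Finset.univ p (Finset.mem_univ last)]
    exact dvd_mul_left _ _
  constructor
  · -- forward direction
    rintro ⟨B, hBrank, hBchar⟩
    have hadjD : ∀ i j, g ∣ Matrix.adjugate (Matrix.charmatrix (Matrix.reindex e e
        (Matrix.blockDiagonal' fun i => companionMatrix ((p i).natDegree) (p i)))) i j := by
      intro i j
      rw [Matrix.charmatrix_reindex, Matrix.reindex_apply,
        Matrix.adjugate_submatrix_equiv_self, Matrix.submatrix_apply,
        charmatrix_blockDiagonal']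
      refine adj_blockDiagonal'_dvd _ g (fun b => ?_) (fun k => ?_) _ _
      · rw [Finset.prod_congr rfl
          (fun k (_ : k ∈ Finset.univ.erase b) => show
            (Matrix.charmatrix (companionMatrix ((p k).natDegree) (p k))).det = p k from hcp k)]
        rw [hgdef]
        exact g_dvd_prod_erase p hdvd b
      · rw [show (Matrix.charmatrix (companionMatrix ((p k).natDegree) (p k))).det = p k from
          hcp k]
        exact (hmon k).ne_zero
    have hcmA : Matrix.charmatrix A = (C : F →+* F[X]).mapMatrix P *
        Matrix.charmatrix (Matrix.reindex e e
          (Matrix.blockDiagonal' fun i => companionMatrix ((p i).natDegree) (p i)))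
        * (C : F →+* F[X]).mapMatrix P⁻¹ := by
      rw [hA]
      exact charmatrix_conj P _ hP
    have hadjA : ∀ i j, g ∣ Matrix.adjugate (Matrix.charmatrix A) i j := by
      intro i j
      rw [hcmA, Matrix.adjugate_mul_distrib, Matrix.adjugate_mul_distrib, Matrix.mul_apply]
      refine Finset.dvd_sum (fun l _ => Dvd.dvd.mul_left ?_ _)
      rw [Matrix.mul_apply]
      exact Finset.dvd_sum (fun l2 _ => (hadjD _ _).mul_right _)
    obtain ⟨u, v, huv⟩ := rank_le_one_exists_vecMulVec hBrank
    have hcm : Matrix.charmatrix (A + B) = Matrix.charmatrix A +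
        Matrix.vecMulVec (fun i => -C (u i)) (fun j => C (v j)) := by
      apply Matrix.ext; intro i j
      by_cases h : i = j
      · subst h
        rw [Matrix.add_apply, Matrix.charmatrix_apply_eq, Matrix.charmatrix_apply_eq,
          Matrix.vecMulVec_apply, Matrix.add_apply, huv, Matrix.vecMulVec_apply, C_add, C_mul]
        ring
      · rw [Matrix.add_apply, Matrix.charmatrix_apply_ne _ _ _ h,
          Matrix.charmatrix_apply_ne _ _ _ h, Matrix.vecMulVec_apply,
          Matrix.add_apply, huv, Matrix.vecMulVec_apply, C_add, C_mul]
        ring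
    have hdetsum : (A + B).charpoly = (Matrix.charmatrix A).det +
        ∑ j, C (v j) * ((Matrix.charmatrix A).updateCol j (fun i => -C (u i))).det := by
      rw [Matrix.charpoly, hcm, det_add_vecMulVec]
    rw [← hBchar, hdetsum]
    refine dvd_add hgA (Finset.dvd_sum fun j _ => Dvd.dvd.mul_left ?_ _)
    rw [← Matrix.cramer_apply, Matrix.cramer_eq_adjugate_mulVec]
    simp only [Matrix.mulVec, dotProduct]
    exact Finset.dvd_sum fun i _ => (hadjA j i).mul_right _
  · -- backward direction
    intro hgq
    obtain ⟨r, hr⟩ := hgq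
    have hgmon : g.Monic := monic_prod_of_monic _ _ (fun k _ => hmon k)
    have hrmon : r.Monic := by
      have hq' := hq
      rw [hr] at hq'
      exact hgmon.of_mul_monic_left hq'
    have hcard : n = ∑ k, (p k).natDegree := by
      have h1 : Fintype.card (Σ i : Fin s, Fin ((p i).natDegree)) = Fintype.card (Fin n) :=
        Fintype.card_congr e
      simpa using h1.symm
    have hdegg : g.natDegree = ∑ k ∈ Finset.univ.erase last, (p k).natDegree := by
      rw [hglast, Polynomial.natDegree_prod _ _ (fun k _ => (hmon k).ne_zero)]
    have hdr : r.natDegree = (p last).natDegree := by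
      have h2 : q.natDegree = g.natDegree + r.natDegree := by
        rw [hr, Polynomial.natDegree_mul hgmon.ne_zero hrmon.ne_zero]
      have h3 : (∑ k, (p k).natDegree) = (p last).natDegree +
          ∑ k ∈ Finset.univ.erase last, (p k).natDegree :=
        (Finset.add_sum_erase _ _ (Finset.mem_univ last)).symm
      omega
    set N' : ∀ k : Fin s, Matrix (Fin ((p k).natDegree)) (Fin ((p k).natDegree)) F :=
      Function.update (fun k => companionMatrix ((p k).natDegree) (p k)) last
        (companionMatrix ((p last).natDegree) r) with hN'
    set j₀ : Σ k : Fin s, Fin ((p k).natDegree) :=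
      ⟨last, ⟨(p last).natDegree - 1, by have := hdeg last; omega⟩⟩ with hj₀
    set Ediff : Matrix (Σ k : Fin s, Fin ((p k).natDegree))
        (Σ k : Fin s, Fin ((p k).natDegree)) F :=
      Matrix.blockDiagonal' N' -
        Matrix.blockDiagonal' (fun k => companionMatrix ((p k).natDegree) (p k)) with hEdiff
    refine ⟨P * (Matrix.reindex e e Ediff) * P⁻¹, ?_, ?_⟩
    · -- rank bound
      have h1 : Ediff = Matrix.vecMulVec (fun x => Ediff x j₀) (Pi.single j₀ 1) := by
        apply Matrix.ext; rintro ⟨kx, mx⟩ ⟨ky, my⟩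
        rw [Matrix.vecMulVec_apply, Pi.single_apply]
        by_cases hy : (⟨ky, my⟩ : Σ k : Fin s, Fin ((p k).natDegree)) = j₀
        · rw [hy, if_pos rfl, mul_one]
        · rw [if_neg hy, mul_zero, hEdiff, Matrix.sub_apply]
          by_cases hk : kx = ky
          · cases hk
            rw [Matrix.blockDiagonal'_apply_eq, Matrix.blockDiagonal'_apply_eq]
            by_cases hkl : kx = last
            · cases hkl
              rw [hN', Function.update_self]
              have hmy : (my : ℕ) ≠ (p last).natDegree - 1 := by
                intro hc
                apply hy
                rw [hj₀]
                exact congrArg (fun m => (⟨last, m⟩ : Σ k : Fin s, Fin ((p k).natDegree)))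
                  (Fin.ext hc)
              simp [companionMatrix, hmy]
            · rw [hN', Function.update_of_ne hkl, sub_self]
          · rw [Matrix.blockDiagonal'_apply_ne _ _ _ hk,
              Matrix.blockDiagonal'_apply_ne _ _ _ hk, sub_self]
      calc (P * (Matrix.reindex e e Ediff) * P⁻¹).rank
          ≤ ((Matrix.reindex e e Ediff) * P⁻¹).rank := by
            rw [Matrix.mul_assoc]; exact Matrix.rank_mul_le_right _ _
        _ ≤ (Matrix.reindex e e Ediff).rank := Matrix.rank_mul_le_left _ _
        _ = Ediff.rank := by
            rw [Matrix.reindex_apply]; exact Matrix.rank_submatrix Ediff e.symm e.symm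
        _ ≤ 1 := by rw [h1]; exact rank_vecMulVec_le_one _ _
    · -- characteristic polynomial
      have hAB : A + P * (Matrix.reindex e e Ediff) * P⁻¹
          = P * (Matrix.reindex e e (Matrix.blockDiagonal' N')) * P⁻¹ := by
        rw [hA, ← Matrix.add_mul, ← Matrix.mul_add]
        congr 2
        apply Matrix.ext; intro i j
        rw [Matrix.add_apply, Matrix.reindex_apply, Matrix.reindex_apply,
          Matrix.submatrix_apply, Matrix.submatrix_apply, Matrix.reindex_apply,
          Matrix.submatrix_apply, hEdiff, Matrix.sub_apply]
        ring
      rw [hAB, charpoly_conj _ _ hP, Matrix.charpoly_reindex, charpoly_blockDiagonal']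
      rw [← Finset.mul_prod_erase Finset.univ _ (Finset.mem_univ last)]
      have h5 : (N' last).charpoly = r := by
        rw [hN', Function.update_self]
        have h := charpoly_companion r hrmon (by rw [hdr]; exact hdeg last)
        rw [hdr] at h
        exact h
      have h6 : ∏ k ∈ Finset.univ.erase last, (N' k).charpoly = g := by
        rw [hglast]
        refine Finset.prod_congr rfl (fun k hk => ?_)
        rw [hN', Function.update_of_ne (Finset.ne_of_mem_erase hk)]
        exact hcp k
      rw [h5, h6, hr, mul_comm]
end
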